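/- Let e = {e_n}_{n≥1} and f = {f_n}_{n≥1} be two orthonormal bases of H. Then e and f are K(H)-equivalent (i.e., there exists a unitary W with W − I compact and W f_n = e_n for all n) if and only if for every ε > 0 there exists N ∈ ℕ such that for all α = (α_n)_{n≥1} ∈ ℓ²(ℕ) one has ‖∑_{n > N} α_n (e_n − f_n)‖ ≤ ε ‖α‖_{ℓ²}. -/

import Mathlib

open Filter Topology
open scoped InnerProductSpace

noncomputable section

variable {H : Type*} [NormedAddCommGroup H] [InnerProductSpace ℂ H] [CompleteSpace H]

/-- A (two-sided) operator ideal of `B(H)`. -/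
def IsOpIdeal (J : Set (H →L[ℂ] H)) : Prop :=
  (0 : H →L[ℂ] H) ∈ J ∧
  (∀ A B : H →L[ℂ] H, A ∈ J → B ∈ J → A + B ∈ J) ∧
  (∀ A B : H →L[ℂ] H, B ∈ J → A * B ∈ J) ∧
  (∀ A B : H →L[ℂ] H, A ∈ J → A * B ∈ J)

/-- A proper operator ideal: `{0} ≠ J ≠ B(H)`. -/
def IsProperOpIdeal (J : Set (H →L[ℂ] H)) : Prop :=
  IsOpIdeal J ∧ J ≠ {0} ∧ J ≠ Set.univ

/-- Orthogonal (self-adjoint, idempotent) projection. -/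
def IsOrthogonalProjection (P : H →L[ℂ] H) : Prop :=
  IsSelfAdjoint P ∧ P * P = P

/-- Diagonal with respect to the fixed orthonormal basis `e`. -/
def IsDiagonalOp (e : HilbertBasis ℕ ℂ H) (A : H →L[ℂ] H) : Prop :=
  ∀ m n : ℕ, m ≠ n → ⟪A (e m), e n⟫_ℂ = 0

def IsDiagonalProjection (e : HilbertBasis ℕ ℂ H) (P : H →L[ℂ] H) : Prop :=
  IsOrthogonalProjection P ∧ IsDiagonalOp e P

/-- Membership in the restricted unitary group `U_J(H) = U(H) ∩ (I + J)`. -/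
def InRestrictedUnitary (J : Set (H →L[ℂ] H)) (U : H →L[ℂ] H) : Prop :=
  U ∈ unitary (H →L[ℂ] H) ∧ U - 1 ∈ J

/-- `A` is `U_J(H)`-diagonalizable with respect to `e`. -/
def RestrictedDiagonalizable (e : HilbertBasis ℕ ℂ H) (J : Set (H →L[ℂ] H))
    (A : H →L[ℂ] H) : Prop :=
  ∃ U : H →L[ℂ] H, InRestrictedUnitary J U ∧ IsDiagonalOp e (U * A * star U)

/-- Convergence of the partial sums of the series `∑ T n` to `S` in the weak operator
topology. -/
def WOTSum (T : ℕ → H →L[ℂ] H) (S : H →L[ℂ] H) : Prop :=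
  ∀ x y : H, Tendsto (fun N : ℕ => ∑ n ∈ Finset.range N, ⟪T n x, y⟫_ℂ)
    atTop (nhds ⟪S x, y⟫_ℂ)

/-- Decomposition of the identity: mutually orthogonal self-adjoint projections summing
to the identity in the strong operator topology. -/
def IsDecompositionOfIdentity (P : ℕ → H →L[ℂ] H) : Prop :=
  (∀ n, IsOrthogonalProjection (P n)) ∧ (∀ m n, m ≠ n → P m * P n = 0) ∧
  (∀ x : H, HasSum (fun n => P n x) x)

/-- `A` is diagonalizable with infinite point spectrum, distinct eigenvalues `lam` and
spectral projections `P`. -/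
def SpectralDataOf (A : H →L[ℂ] H) (lam : ℕ → ℂ) (P : ℕ → H →L[ℂ] H) : Prop :=
  IsDecompositionOfIdentity P ∧ (∀ n, P n ≠ 0) ∧ Function.Injective lam ∧
  (∀ x : H, HasSum (fun n => lam n • P n x) (A x))

/-- Finite rank operator. -/
def IsFiniteRankOp (T : H →L[ℂ] H) : Prop :=
  FiniteDimensional ℂ (LinearMap.range (T : H →ₗ[ℂ] H))

/-- The `n`-th approximation number (= `(n+1)`-th singular value for compact operators). -/
noncomputable def sNum (T : H →L[ℂ] H) (n : ℕ) : ℝ :=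
  sInf {c : ℝ | ∃ F : H →L[ℂ] H, IsFiniteRankOp F ∧
    Module.finrank ℂ (LinearMap.range (F : H →ₗ[ℂ] H)) ≤ n ∧ c = ‖T - F‖}

/-- The arithmetic mean closure `J^{-am}` of an operator ideal. -/
def amClosure (J : Set (H →L[ℂ] H)) : Set (H →L[ℂ] H) :=
  {A | IsCompactOperator ⇑A ∧ ∃ B ∈ J, ∃ M : ℝ, 0 < M ∧ ∀ n : ℕ,
    (∑ k ∈ Finset.range (n + 1), sNum A k) ≤ M * (∑ k ∈ Finset.range (n + 1), sNum B k)}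

/-- `(P, Q)` is a Fredholm pair of projections with essential codimension `[P : Q] = 0`. -/
def EssCodimZero (P Q : H →L[ℂ] H) : Prop :=
  IsClosed (⇑Q '' (LinearMap.range (P : H →ₗ[ℂ] H) : Set H)) ∧
  FiniteDimensional ℂ
    ↥(LinearMap.ker (Q : H →ₗ[ℂ] H) ⊓ LinearMap.range (P : H →ₗ[ℂ] H)) ∧
  FiniteDimensional ℂ
    ↥(LinearMap.range (Q : H →ₗ[ℂ] H) ⊓ LinearMap.ker (P : H →ₗ[ℂ] H)) ∧
  Module.finrank ℂ
    ↥(LinearMap.ker (Q : H →ₗ[ℂ] H) ⊓ LinearMap.range (P : H →ₗ[ℂ] H)) =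
  Module.finrank ℂ
    ↥(LinearMap.range (Q : H →ₗ[ℂ] H) ⊓ LinearMap.ker (P : H →ₗ[ℂ] H))

/-- Hilbert–Schmidt operator. -/
def IsHilbertSchmidt (T : H →L[ℂ] H) : Prop :=
  ∀ b : HilbertBasis ℕ ℂ H, Summable (fun n => ‖T (b n)‖ ^ 2)

/-- Partial isometry: isometric on the orthogonal complement of its kernel. -/
def IsPartialIsometryOp (V : H →L[ℂ] H) : Prop :=
  ∀ x ∈ (LinearMap.ker (V : H →ₗ[ℂ] H))ᗮ, ‖V x‖ = ‖x‖

/-! ### Auxiliary machinery for Statement 12 -/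

/-- The span of the first `N+1` basis vectors. -/
def headSpan (b : HilbertBasis ℕ ℂ H) (N : ℕ) : Submodule ℂ H :=
  Submodule.span ℂ (b '' Set.Iic N)

instance headSpan_fd (b : HilbertBasis ℕ ℂ H) (N : ℕ) : FiniteDimensional ℂ (headSpan b N) :=
  FiniteDimensional.span_of_finite ℂ ((Set.finite_Iic N).image b)

instance headSpan_hop (b : HilbertBasis ℕ ℂ H) (N : ℕ) :
    Submodule.HasOrthogonalProjection (headSpan b N) := by
  haveI : CompleteSpace (headSpan b N) := FiniteDimensional.complete ℂ _
  infer_instance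

/-- The "tail part" of a vector: `x` minus its projection onto `headSpan b N`. -/
def tailPart (b : HilbertBasis ℕ ℂ H) (N : ℕ) (x : H) : H :=
  x - Submodule.orthogonalProjectionOnto (headSpan b N) x

lemma tailPart_sub (b : HilbertBasis ℕ ℂ H) (N : ℕ) (x y : H) :
    tailPart b N (x - y) = tailPart b N x - tailPart b N y := by
  simp only [tailPart, map_sub, Submodule.coe_sub]
  abel

lemma tailPart_smul (b : HilbertBasis ℕ ℂ H) (N : ℕ) (c : ℂ) (x : H) :
    tailPart b N (c • x) = c • tailPart b N x := by
  simp only [tailPart, map_smul, Submodule.coe_smul, smul_sub]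

lemma norm_tailPart_le_sub (b : HilbertBasis ℕ ℂ H) (N : ℕ) (x : H) {w : H}
    (hw : w ∈ headSpan b N) : ‖tailPart b N x‖ ≤ ‖x - w‖ := by
  rw [tailPart, ← Submodule.starProjection_apply, Submodule.starProjection_minimal]
  exact ciInf_le ⟨0, by rintro t ⟨i, rfl⟩; exact norm_nonneg _⟩ (⟨w, hw⟩ : headSpan b N)

lemma norm_tailPart_le (b : HilbertBasis ℕ ℂ H) (N : ℕ) (x : H) :
    ‖tailPart b N x‖ ≤ ‖x‖ := by
  simpa using norm_tailPart_le_sub b N x (Submodule.zero_mem _)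

lemma norm_tailPart_mono (b : HilbertBasis ℕ ℂ H) {N M : ℕ} (h : N ≤ M) (x : H) :
    ‖tailPart b M x‖ ≤ ‖tailPart b N x‖ :=
  norm_tailPart_le_sub b M x <|
    Submodule.span_mono (Set.image_mono (Set.Iic_subset_Iic.2 h))
      (Submodule.orthogonalProjectionOnto (headSpan b N) x).2

lemma tendsto_norm_tailPart (b : HilbertBasis ℕ ℂ H) (x : H) :
    Tendsto (fun N => ‖tailPart b N x‖) atTop (𝓝 0) := by
  have h1 : Tendsto (fun N : ℕ => ∑ n ∈ Finset.range (N + 1), b.repr x n • b n)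
      atTop (𝓝 x) := (b.hasSum_repr x).tendsto_sum_nat.comp (tendsto_add_atTop_nat 1)
  have h2 : Tendsto (fun N : ℕ => ‖x - ∑ n ∈ Finset.range (N + 1), b.repr x n • b n‖)
      atTop (𝓝 0) := by
    have := ((tendsto_const_nhds (x := x) (f := atTop)).sub h1).norm
    simpa using this
  refine squeeze_zero (fun N => norm_nonneg _) (fun N => norm_tailPart_le_sub b N x ?_) h2
  exact Submodule.sum_smul_mem _ _ fun n hn =>
    Submodule.subset_span ⟨n, Finset.mem_range_succ_iff.mp hn, rfl⟩

lemma uniform_tailPart (b : HilbertBasis ℕ ℂ H) {C : Set H} (hC : IsCompact C) {ε : ℝ}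
    (hε : 0 < ε) : ∃ N, ∀ z ∈ C, ‖tailPart b N z‖ ≤ ε := by
  obtain ⟨t, -, hcov⟩ := hC.elim_nhds_subcover (fun z => Metric.ball z (ε / 2))
    (fun z _ => Metric.ball_mem_nhds z (half_pos hε))
  choose Nz hNz using fun z : H =>
    ((tendsto_norm_tailPart b z).eventually (gt_mem_nhds (half_pos hε))).exists
  refine ⟨t.sup Nz, fun z hz => ?_⟩
  obtain ⟨i, hit, hzi⟩ := Set.mem_iUnion₂.mp (hcov hz)
  have h1 : ‖tailPart b (t.sup Nz) i‖ ≤ ε / 2 :=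
    le_trans (norm_tailPart_mono b (Finset.le_sup hit) i) (hNz i).le
  have h2 : tailPart b (t.sup Nz) z
      = tailPart b (t.sup Nz) i + tailPart b (t.sup Nz) (z - i) := by
    rw [tailPart_sub]; abel
  have h3 : ‖tailPart b (t.sup Nz) (z - i)‖ ≤ ‖z - i‖ := norm_tailPart_le _ _ _
  have h4 : ‖z - i‖ < ε / 2 := by
    rw [← dist_eq_norm]; exact Metric.mem_ball.mp hzi
  calc ‖tailPart b (t.sup Nz) z‖
      ≤ ‖tailPart b (t.sup Nz) i‖ + ‖tailPart b (t.sup Nz) (z - i)‖ := by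
        rw [h2]; exact norm_add_le _ _
    _ ≤ ε / 2 + ε / 2 := by have := h3.trans h4.le; linarith
    _ = ε := by ring

lemma inner_tailPart (b : HilbertBasis ℕ ℂ H) (N : ℕ) (u v : H) :
    ⟪tailPart b N u, v⟫_ℂ = ⟪u, tailPart b N v⟫_ℂ := by
  simp only [tailPart, inner_sub_left, inner_sub_right,
    ← Submodule.starProjection_apply, Submodule.inner_starProjection_left_eq_right]

lemma mem_orthogonal_headSpan (b : HilbertBasis ℕ ℂ H) (N : ℕ) {y : H}
    (h : ∀ n ≤ N, ⟪b n, y⟫_ℂ = 0) : y ∈ (headSpan b N)ᗮ := by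
  rw [Submodule.mem_orthogonal]
  intro u hu
  induction hu using Submodule.span_induction with
  | mem x hx => obtain ⟨n, hn, rfl⟩ := hx; exact h n hn
  | zero => simp
  | add x y _ _ hx hy => rw [inner_add_left, hx, hy, add_zero]
  | smul c x _ hx => rw [inner_smul_left, hx, mul_zero]

lemma tailPart_eq_self (b : HilbertBasis ℕ ℂ H) (N : ℕ) {y : H}
    (hy : y ∈ (headSpan b N)ᗮ) : tailPart b N y = y := by
  rw [tailPart, Submodule.orthogonalProjectionOnto_apply_of_mem_orthogonal hy]
  simp

lemma repr_eq_zero_of_mem_orthogonal (b : HilbertBasis ℕ ℂ H) (N : ℕ) {y : H}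
    (hy : y ∈ (headSpan b N)ᗮ) : ∀ n ≤ N, b.repr y n = 0 := fun n hn => by
  rw [b.repr_apply_apply]
  exact (Submodule.mem_orthogonal _ _).1 hy _ (Submodule.subset_span ⟨n, hn, rfl⟩)

lemma hasSum_tail (e f : HilbertBasis ℕ ℂ H) (W : H →L[ℂ] H) (hW : ∀ n, W (f n) = e n)
    (N : ℕ) (α : lp (fun _ : ℕ => ℂ) 2) (hα : ∀ n ≤ N, α n = 0) :
    HasSum (fun n : {n : ℕ // N < n} => α (n : ℕ) • (e (n : ℕ) - f (n : ℕ)))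
      ((W - 1) (f.repr.symm α)) := by
  have h2 : HasSum (fun n => α n • f n) (f.repr.symm α) := f.hasSum_repr_symm α
  have h3 : HasSum (fun n => α n • e n) (W (f.repr.symm α)) := by
    have := h2.mapL W
    simpa only [map_smul, hW] using this
  have h4 : HasSum (fun n => α n • (e n - f n)) ((W - 1) (f.repr.symm α)) := by
    have := h3.sub h2
    simpa only [smul_sub, ContinuousLinearMap.sub_apply, ContinuousLinearMap.one_apply]
      using this
  have hsupp : Function.support (fun n => α n • (e n - f n)) ⊆ {n : ℕ | N < n} := by
    intro n hn
    simp only [Function.mem_support, ne_eq] at hn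
    by_contra hn'
    exact hn (by rw [hα n (not_lt.1 hn'), zero_smul])
  exact (hasSum_subtype_iff_of_support_subset hsupp).2 h4

lemma compact_tail_bound (b : HilbertBasis ℕ ℂ H) {K : H →L[ℂ] H}
    (hK : IsCompactOperator ⇑K) {ε : ℝ} (hε : 0 < ε) :
    ∃ N, ∀ y ∈ (headSpan b N)ᗮ, ‖K y‖ ≤ ε * ‖y‖ := by
  set T : H →L[ℂ] H := (ContinuousLinearMap.adjoint K).comp K with hT
  have hTc : IsCompactOperator ⇑T := hK.clm_comp (ContinuousLinearMap.adjoint K)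
  obtain ⟨C, hCcpt, hCmem⟩ := hTc
  obtain ⟨r, hr, hball⟩ := Metric.mem_nhds_iff.1 hCmem
  have hδ : 0 < ε ^ 2 * (r / 2) := by positivity
  obtain ⟨N, hN⟩ := uniform_tailPart b hCcpt hδ
  refine ⟨N, fun y hy => ?_⟩
  rcases eq_or_ne y 0 with rfl | hy0
  · simp [mul_nonneg hε.le (norm_nonneg _)]
  have hy' : 0 < ‖y‖ := norm_pos_iff.2 hy0
  set c : ℝ := r / (2 * ‖y‖) with hc
  have hcpos : 0 < c := by positivity
  have htail : ‖tailPart b N (T y)‖ ≤ ε ^ 2 * ‖y‖ := by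
    have hy0' : ‖y‖ ≠ 0 := ne_of_gt hy'
    have hz : (c : ℂ) • y ∈ Metric.ball (0 : H) r := by
      have hcy : ‖(c : ℂ) • y‖ = r / 2 := by
        rw [norm_smul, Complex.norm_real, Real.norm_eq_abs, abs_of_pos hcpos, hc]
        field_simp
      rw [Metric.mem_ball, dist_zero_right, hcy]
      linarith
    have hmem : T ((c : ℂ) • y) ∈ C := hball hz
    have h1 : ‖tailPart b N (T ((c : ℂ) • y))‖ ≤ ε ^ 2 * (r / 2) := hN _ hmem
    have h2 : tailPart b N (T ((c : ℂ) • y)) = (c : ℂ) • tailPart b N (T y) := by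
      rw [map_smul, tailPart_smul]
    rw [h2, norm_smul, Complex.norm_real, Real.norm_eq_abs, abs_of_pos hcpos] at h1
    have h3 : ‖tailPart b N (T y)‖ ≤ ε ^ 2 * (r / 2) / c := by
      rw [le_div_iff₀ hcpos, mul_comm]; exact h1
    calc ‖tailPart b N (T y)‖ ≤ ε ^ 2 * (r / 2) / c := h3
      _ = ε ^ 2 * ‖y‖ := by
          have hr0 : r ≠ 0 := ne_of_gt hr
          have hy0' : ‖y‖ ≠ 0 := ne_of_gt hy'
          rw [hc]
          field_simp
  have hyy : tailPart b N y = y := tailPart_eq_self b N hy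
  have hinner : (⟪K y, K y⟫_ℂ) = ⟪y, tailPart b N (T y)⟫_ℂ := by
    have e1 : (⟪K y, K y⟫_ℂ) = ⟪y, T y⟫_ℂ := by
      rw [hT, ContinuousLinearMap.comp_apply, ContinuousLinearMap.adjoint_inner_right]
    rw [e1, ← hyy, inner_tailPart, hyy]
  have hsq : ‖K y‖ ^ 2 ≤ (ε * ‖y‖) ^ 2 := by
    have e2 : ((‖K y‖ : ℂ)) ^ 2 = ⟪y, tailPart b N (T y)⟫_ℂ := by
      rw [← hinner, inner_self_eq_norm_sq_to_K]
      norm_cast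
    have e3 : ‖K y‖ ^ 2 = ‖(⟪y, tailPart b N (T y)⟫_ℂ)‖ := by
      rw [← e2, norm_pow, Complex.norm_real, Real.norm_eq_abs, abs_of_nonneg (norm_nonneg _)]
    rw [e3]
    calc ‖(⟪y, tailPart b N (T y)⟫_ℂ)‖ ≤ ‖y‖ * ‖tailPart b N (T y)‖ :=
          norm_inner_le_norm _ _
      _ ≤ ‖y‖ * (ε ^ 2 * ‖y‖) := by
          exact mul_le_mul_of_nonneg_left htail (norm_nonneg _)
      _ = (ε * ‖y‖) ^ 2 := by ring
  exact (pow_le_pow_iff_left₀ (norm_nonneg _) (by positivity) two_ne_zero).1 hsq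

lemma memℓp_trunc (N : ℕ) (α : lp (fun _ : ℕ => ℂ) 2) :
    Memℓp (fun n => if N < n then α n else 0) 2 := by
  apply memℓp_gen
  have hα : Summable fun n => ‖α n‖ ^ (2 : ENNReal).toReal :=
    (memℓp_gen_iff (by norm_num)).1 (lp.memℓp α)
  refine hα.of_nonneg_of_le (fun n => Real.rpow_nonneg (norm_nonneg _) _) (fun n => ?_)
  by_cases h : N < n
  · simp [h]
  · simp only [h, if_false, norm_zero]
    rw [Real.zero_rpow (by norm_num)]
    exact Real.rpow_nonneg (norm_nonneg _) _

lemma norm_trunc_le (N : ℕ) (α : lp (fun _ : ℕ => ℂ) 2) :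
    ‖(⟨fun n => if N < n then α n else 0, memℓp_trunc N α⟩ : lp (fun _ : ℕ => ℂ) 2)‖
      ≤ ‖α‖ := by
  have hp : 0 < (2 : ENNReal).toReal := by norm_num
  refine lp.norm_le_of_tsum_le hp (norm_nonneg _) ?_
  have hsum : Summable fun n => ‖α n‖ ^ (2 : ENNReal).toReal :=
    (memℓp_gen_iff hp).1 (lp.memℓp α)
  rw [lp.norm_rpow_eq_tsum hp α]
  refine Summable.tsum_le_tsum (fun n => ?_) ((memℓp_gen_iff hp).1 (lp.memℓp _)) hsum
  show ‖if N < n then α n else 0‖ ^ (2 : ENNReal).toReal ≤ _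
  by_cases h : N < n
  · simp [h]
  · simp only [h, if_false, norm_zero]
    rw [Real.zero_rpow (by norm_num)]
    exact Real.rpow_nonneg (norm_nonneg _) _

/-- Example: `K(H)`-equivalence of orthonormal bases. -/
theorem compact_equivalent_bases (e f : HilbertBasis ℕ ℂ H) :
    (∃ W : H →L[ℂ] H, W ∈ unitary (H →L[ℂ] H) ∧ IsCompactOperator ⇑(W - 1) ∧
      ∀ n, W (f n) = e n) ↔
      ∀ ε : ℝ, 0 < ε → ∃ N : ℕ, ∀ (α : lp (fun _ : ℕ => ℂ) 2) (v : H),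
        HasSum (fun n : {n : ℕ // N < n} => α (n : ℕ) • (e (n : ℕ) - f (n : ℕ))) v →
        ‖v‖ ≤ ε * ‖α‖ := by
  constructor
  · rintro ⟨W, -, hcpt, hWf⟩ ε hε
    obtain ⟨N, hN⟩ := compact_tail_bound f hcpt hε
    refine ⟨N, fun α v hv => ?_⟩
    set β : lp (fun _ : ℕ => ℂ) 2 :=
      ⟨fun n => if N < n then α n else 0, memℓp_trunc N α⟩ with hβ
    have hβapp : ∀ n, β n = if N < n then α n else 0 := fun n => rfl
    have hβ0 : ∀ n ≤ N, β n = 0 := fun n hn => by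
      rw [hβapp]; exact if_neg (not_lt.2 hn)
    have hsum2 := hasSum_tail e f W hWf N β hβ0
    have heq : (fun n : {n : ℕ // N < n} => β (n : ℕ) • (e (n : ℕ) - f (n : ℕ)))
        = (fun n : {n : ℕ // N < n} => α (n : ℕ) • (e (n : ℕ) - f (n : ℕ))) := by
      funext n
      rw [hβapp, if_pos n.2]
    rw [heq] at hsum2
    have hveq : v = (W - 1) (f.repr.symm β) := hv.unique hsum2
    have hmem : f.repr.symm β ∈ (headSpan f N)ᗮ := by
      apply mem_orthogonal_headSpan
      intro n hn
      rw [← f.repr_apply_apply, LinearIsometryEquiv.apply_symm_apply]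
      exact hβ0 n hn
    have hb1 := hN _ hmem
    have hnorm : ‖f.repr.symm β‖ = ‖β‖ := LinearIsometryEquiv.norm_map _ _
    calc ‖v‖ = ‖(W - 1) (f.repr.symm β)‖ := by rw [hveq]
      _ ≤ ε * ‖f.repr.symm β‖ := hb1
      _ = ε * ‖β‖ := by rw [hnorm]
      _ ≤ ε * ‖α‖ := mul_le_mul_of_nonneg_left (norm_trunc_le N α) hε.le
  · intro hRHS
    set W0 : H ≃ₗᵢ[ℂ] H := f.repr.trans e.repr.symm with hW0
    set W : H →L[ℂ] H := W0.toLinearIsometry.toContinuousLinearMap with hWdef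
    have hWapp : ∀ x, W x = W0 x := fun x => rfl
    have hWf : ∀ n, W (f n) = e n := by
      intro n
      rw [hWapp]
      show e.repr.symm (f.repr (f n)) = e n
      rw [f.repr_self, ← e.repr_self, LinearIsometryEquiv.symm_apply_apply]
    have hadj : W0.symm.toLinearIsometry.toContinuousLinearMap
        = ContinuousLinearMap.adjoint W := by
      rw [ContinuousLinearMap.eq_adjoint_iff]
      intro x y
      show (⟪W0.symm x, y⟫_ℂ) = ⟪x, W0 y⟫_ℂ
      rw [← W0.inner_map_map (W0.symm x) y, W0.apply_symm_apply]
    have huni : W ∈ unitary (H →L[ℂ] H) := by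
      rw [Unitary.mem_iff]
      constructor
      · rw [ContinuousLinearMap.star_eq_adjoint, ← hadj]
        ext x
        show W0.symm (W0 x) = x
        exact W0.symm_apply_apply x
      · rw [ContinuousLinearMap.star_eq_adjoint, ← hadj]
        ext x
        show W0 (W0.symm x) = x
        exact W0.apply_symm_apply x
    have hbound : ∀ ε : ℝ, 0 < ε → ∃ Fop : H →L[ℂ] H,
        IsCompactOperator ⇑Fop ∧ ‖(W - 1) - Fop‖ ≤ ε := by
      intro ε hε
      obtain ⟨N, hN⟩ := hRHS ε hε
      set S := headSpan f N with hS
      set P : H →L[ℂ] H := S.subtypeL.comp (Submodule.orthogonalProjectionOnto S) with hP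
      refine ⟨(W - 1).comp P, ?_, ?_⟩
      · haveI : CompleteSpace S := FiniteDimensional.complete ℂ _
        haveI : ProperSpace S := FiniteDimensional.proper ℂ S
        have h1 : IsCompactOperator (⇑(Submodule.orthogonalProjectionOnto S) : H → S) := by
          refine ⟨Metric.closedBall 0 1, isCompact_closedBall _ _, ?_⟩
          refine Filter.mem_of_superset (Metric.closedBall_mem_nhds (0 : H) one_pos) ?_
          intro x hx
          have h2 : ‖Submodule.orthogonalProjectionOnto S x‖ ≤ ‖x‖ := by
            calc ‖Submodule.orthogonalProjectionOnto S x‖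
                ≤ ‖Submodule.orthogonalProjectionOnto S‖ * ‖x‖ :=
                  (Submodule.orthogonalProjectionOnto S).le_opNorm x
              _ ≤ 1 * ‖x‖ :=
                  mul_le_mul_of_nonneg_right (Submodule.orthogonalProjectionOnto_norm_le (K := S))
                    (norm_nonneg _)
              _ = ‖x‖ := one_mul _
          simp only [Set.mem_preimage, Metric.mem_closedBall, dist_zero_right] at *
          exact h2.trans hx
        have h2 := h1.clm_comp ((W - 1).comp S.subtypeL)
        have h3 : ⇑((W - 1).comp P)
            = ⇑((W - 1).comp S.subtypeL) ∘ ⇑(Submodule.orthogonalProjectionOnto S) := rfl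
        rw [h3]
        exact h2
      · refine ContinuousLinearMap.opNorm_le_bound _ hε.le fun x => ?_
        have hy : tailPart f N x ∈ Sᗮ := by
          rw [tailPart, ← Submodule.starProjection_apply]
          exact Submodule.sub_starProjection_mem_orthogonal x
        set y := tailPart f N x with hydef
        set α := f.repr y with hα
        have hα0 : ∀ n ≤ N, α n = 0 := repr_eq_zero_of_mem_orthogonal f N hy
        have hsum := hasSum_tail e f W hWf N α hα0
        rw [hα, LinearIsometryEquiv.symm_apply_apply] at hsum
        have hKy : ‖(W - 1) y‖ ≤ ε * ‖α‖ := hN α _ hsum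
        have happ : ((W - 1) - (W - 1).comp P) x = (W - 1) y := by
          rw [ContinuousLinearMap.sub_apply, ContinuousLinearMap.comp_apply, hP,
            ContinuousLinearMap.comp_apply, ← map_sub]
          rfl
        rw [happ]
        calc ‖(W - 1) y‖ ≤ ε * ‖α‖ := hKy
          _ = ε * ‖y‖ := by rw [hα, LinearIsometryEquiv.norm_map]
          _ ≤ ε * ‖x‖ :=
            mul_le_mul_of_nonneg_left (norm_tailPart_le f N x) hε.le
    have hcpt : IsCompactOperator ⇑(W - 1) := by
      choose Fop hFc hFn using fun k : ℕ => hbound (1 / (k + 1)) (by positivity)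
      refine isCompactOperator_of_tendsto (l := atTop) (F := Fop) ?_
        (Eventually.of_forall hFc)
      rw [tendsto_iff_norm_sub_tendsto_zero]
      refine squeeze_zero (fun k => norm_nonneg _) (fun k => ?_)
        tendsto_one_div_add_atTop_nhds_zero_nat
      rw [norm_sub_rev]
      exact hFn k
    exact ⟨W, huni, hcpt, hWf⟩

end
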